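/- Non-collapsing is preserved under renaming the indeterminate: if t is a closed term over Σ₁ ∪ Σ₂ ∪ Σ₃ ∪ {x} such that t^𝒜 = [t]_≅ and u^𝒜 = [u]_≅ for every alien subterm u of t at arbitrary depth, then for every i ≥ 1 the term t(xᵢ) := t[xᵢ/x] also satisfies t(xᵢ)^𝒜 = [t(xᵢ)]_≅, and v^𝒜 = [v]_≅ for every alien subterm v of t(xᵢ) at arbitrary depth. -/

import Mathlib

/-- First-order terms over symbols `S` with arity `ar` and variables `V`. -/
inductive Tm (S : Type) (ar : S → ℕ) (V : Type) : Type
  | var : V → Tm S ar V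
  | app : (f : S) → (Fin (ar f) → Tm S ar V) → Tm S ar V

namespace Tm
variable {S : Type} {ar : S → ℕ} {V W : Type}

def mapVar (g : V → W) : Tm S ar V → Tm S ar W
  | var v => var (g v)
  | app f ts => app f (fun i => (ts i).mapVar g)

def bind : Tm S ar V → (V → Tm S ar W) → Tm S ar W
  | var v, g => g v
  | app f ts, g => app f (fun i => (ts i).bind g)

/-- All variables of a term belong to a given set. -/
def VarsIn : Tm S ar V → Set V → Prop
  | var v, A => v ∈ A
  | app _ ts, A => ∀ i, VarsIn (ts i) A

/-- The term contains at least one variable. -/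
def HasVar : Tm S ar V → Prop
  | var _ => True
  | app _ ts => ∃ i, HasVar (ts i)

end Tm

/-- The combined signature: operation symbols of the two theories (`op`),
generator constants `y₁,…,yₙ` (`gen`), and indeterminate constants `x = ind 0`,
`xᵢ = ind i` (`ind`). -/
inductive CSym (F : Bool → Type) (n : ℕ) : Type
  | op : (b : Bool) → F b → CSym F n
  | gen : Fin n → CSym F n
  | ind : ℕ → CSym F n

namespace CSym
variable {F : Bool → Type} {n : ℕ}

def arity (arF : ∀ b, F b → ℕ) : CSym F n → ℕ
  | op b f => arF b f
  | gen _ => 0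
  | ind _ => 0

/-- Which of the four component signatures a symbol belongs to:
`0 = Σ₁`, `1 = Σ₂`, `2 = Σ₃`, `3 = Σ₄`. -/
def sig : CSym F n → Fin 4
  | op false _ => 0
  | op true _ => 1
  | gen _ => 2
  | ind _ => 3

end CSym
section Setup

variable (F : Bool → Type) (arF : ∀ b, F b → ℕ) (n : ℕ)

/-- Closed terms over the combined signature `Σ = Σ₁ ∪ Σ₂ ∪ Σ₃ ∪ Σ₄`. -/
abbrev CT := Tm (CSym F n) (CSym.arity arF) Empty

/-- The root symbol of a closed term. -/
def rootSym : CT F arF n → CSym F n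
  | .var v => v.elim
  | .app f _ => f

/-- All symbols of the closed term satisfy the predicate `P`. -/
def InSig (P : CSym F n → Prop) : CT F arF n → Prop
  | .var v => v.elim
  | .app f ts => P f ∧ ∀ i, InSig P (ts i)

/-- A closed term is pure if all of its symbols belong to a single one of the
four component signatures. -/
def IsPure (t : CT F arF n) : Prop := ∃ k : Fin 4, InSig F arF n (fun s => s.sig = k) t

/-- The rank of a closed term: `0` if pure, and otherwise `1` plus the maximal
rank of its alien subterms. -/
def rank : CT F arF n → ℕ
  | .var v => v.elim
  | .app f ts =>
      Finset.univ.sup fun i =>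
        rank (ts i) + (if (rootSym F arF n (ts i)).sig = f.sig then 0 else 1)

/-- The maximal subterms of `t` whose root is outside signature `k`. -/
def aliensUnder (k : Fin 4) : CT F arF n → Set (CT F arF n)
  | .var v => v.elim
  | .app f ts =>
      if f.sig = k then ⋃ i, aliensUnder k (ts i) else {Tm.app f ts}

/-- The alien subterms of a closed term (relative to the signature of its root). -/
def aliensSet : CT F arF n → Set (CT F arF n)
  | .var v => v.elim
  | .app f ts => ⋃ i, aliensUnder F arF n f.sig (ts i)

/-- All alien subterms at arbitrary depth. -/
def allAliensSet : CT F arF n → Set (CT F arF n)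
  | .var v => v.elim
  | .app f ts =>
      ⋃ i, (if (rootSym F arF n (ts i)).sig = f.sig then (∅ : Set _) else {ts i}) ∪
        allAliensSet (ts i)

/-- View a closed combined term through the layer of theory `b`: keep the
top part built from `Σ_b`-symbols and regard the maximal non-`Σ_b`-rooted
subterms as opaque constants. -/
def layerize (b : Bool) : CT F arF n → Tm (F b) (arF b) (CT F arF n)
  | .app (.op b' f) ts =>
      if h : b' = b then h ▸ (Tm.app f (fun i => layerize b' (ts i)))
      else Tm.var (Tm.app (.op b' f) ts)
  | t => Tm.var t

end Setup
section Setup2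

variable (F : Bool → Type) (arF : ∀ b, F b → ℕ) (n : ℕ)
variable (Ax : ∀ b, Set (Tm (F b) (arF b) ℕ × Tm (F b) (arF b) ℕ))

mutual
/-- The isomorphism relation `≅` on closed combined terms, defined together
with the layer congruences: two terms are isomorphic iff their roots lie in the
same component signature and their alien abstractions are congruent modulo the
corresponding theory (for the constant signatures `Σ₃, Σ₄` this is syntactic
equality). -/
inductive Iso : CT F arF n → CT F arF n → Prop where
  | opEq (b : Bool) (u v : CT F arF n) :
      (∃ g : F b, rootSym F arF n u = .op b g) →
      (∃ g : F b, rootSym F arF n v = .op b g) →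
      LEq b (layerize F arF n b u) (layerize F arF n b v) → Iso u v
  | constEq (t : CT F arF n) :
      ((rootSym F arF n t).sig = 2 ∨ (rootSym F arF n t).sig = 3) → Iso t t

/-- The congruence `≈_b` on `Σ_b`-terms whose constants are closed combined
terms (representing their `≅`-classes): generated by the substitution instances
of the axioms of `𝕋_b` together with the identification of `≅`-related
constants. -/
inductive LEq : (b : Bool) →
    Tm (F b) (arF b) (CT F arF n) → Tm (F b) (arF b) (CT F arF n) → Prop where
  | refl (b) (t) : LEq b t t
  | symm {b s t} : LEq b s t → LEq b t s
  | trans {b s t u} : LEq b s t → LEq b t u → LEq b s u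
  | congr (b) (g : F b) (ts us : Fin (arF b g) → Tm (F b) (arF b) (CT F arF n)) :
      (∀ i, LEq b (ts i) (us i)) → LEq b (.app g ts) (.app g us)
  | varRel (b) (s t : CT F arF n) : Iso s t → LEq b (.var s) (.var t)
  | ax (b) (u v : Tm (F b) (arF b) ℕ) : (u, v) ∈ Ax b →
      ∀ σ : ℕ → Tm (F b) (arF b) (CT F arF n), LEq b (u.bind σ) (v.bind σ)
end

end Setup2
section Setup3

variable (F : Bool → Type) (arF : ∀ b, F b → ℕ) (n : ℕ)
variable (Ax : ∀ b, Set (Tm (F b) (arF b) ℕ × Tm (F b) (arF b) ℕ))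

/-- The combined algebra `𝒜 = Term^c(Σ)/≅`. -/
abbrev Alg := Quot (Iso F arF n Ax)

/-- Provable equality in the theory `𝕋_b` on terms with variables (equivalently
the smallest `Σ_b`-congruence containing all substitution instances of the
axioms of `𝕋_b`); with `V := Alg` this is the congruence `≈_b` on
`Term^c(Σ_b, Term^c(Σ)/≅)`. -/
inductive AxCong (b : Bool) {V : Type} : Tm (F b) (arF b) V → Tm (F b) (arF b) V → Prop where
  | refl (t) : AxCong b t t
  | symm {s t} : AxCong b s t → AxCong b t s
  | trans {s t u} : AxCong b s t → AxCong b t u → AxCong b s u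
  | congr (g : F b) (ts us : Fin (arF b g) → Tm (F b) (arF b) V) :
      (∀ i, AxCong b (ts i) (us i)) → AxCong b (.app g ts) (.app g us)
  | ax (u v : Tm (F b) (arF b) ℕ) : (u, v) ∈ Ax b →
      ∀ σ : ℕ → Tm (F b) (arF b) V, AxCong b (u.bind σ) (v.bind σ)

/-- Abstraction of alien subterms: `[t]ᵇ_≅ ∈ Term^c(Σ_b, Term^c(Σ)/≅)`. -/
def absQ (b : Bool) (t : CT F arF n) : Tm (F b) (arF b) (Alg F arF n Ax) :=
  (layerize F arF n b t).mapVar (Quot.mk _)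

attribute [local instance] Classical.propDecidable

/-- The interpretation `t^𝒜` of a closed combined term in the combined algebra:
a term collapses to (the class of) an alien subterm whose class its alien
abstraction is `≈_b`-congruent to, and is interpreted by its own class
otherwise. -/
noncomputable def interp : CT F arF n → Alg F arF n Ax
  | .app (.op b g) ts =>
      let t' : CT F arF n := .app (.op b g) (fun i => (interp (ts i)).out)
      if h : ∃ u, u ∈ aliensSet F arF n t' ∧
          AxCong F arF Ax b (absQ F arF n Ax b t') (.var (Quot.mk _ u))
      then Quot.mk _ h.choose
      else Quot.mk _ t'
  | t => Quot.mk _ t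

end Setup3
section Setup4

variable (F : Bool → Type) (arF : ∀ b, F b → ℕ) (n : ℕ)
variable (Ax : ∀ b, Set (Tm (F b) (arF b) ℕ × Tm (F b) (arF b) ℕ))

/-- Substitution of a closed term `w` for the indeterminate constant `x_j` in a
closed combined term. -/
def substInd (j : ℕ) (w : CT F arF n) : CT F arF n → CT F arF n
  | .var v => v.elim
  | .app (.ind j') ts => if j' = j then w else .app (.ind j') ts
  | .app f ts => .app f (fun i => substInd j w (ts i))

/-- The indeterminate constant `x_i` as a closed term (`x = xTm 0`). -/
def xTm (i : ℕ) : CT F arF n := .app (.ind i) Fin.elim0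

/-- Replace every indeterminate constant occurring in a term by `x`. -/
def indToX : CT F arF n → CT F arF n
  | .var v => v.elim
  | .app (.ind _) _ => xTm F arF n 0
  | .app f ts => .app f (fun i => indToX (ts i))

/-- Embedding of `Σ_b`-terms into combined terms. -/
def embedOp (b : Bool) {V : Type} : Tm (F b) (arF b) V → Tm (CSym F n) (CSym.arity arF) V
  | .var v => .var v
  | .app g ts => .app (.op b g) (fun i => embedOp b (ts i))

/-- Provable equality for the (combination of the) theories `𝕋_b` (`b ∈ B`) on
closed terms over the sub-signature of symbols satisfying `P`: the smallest
congruence on that set of closed terms containing all substitution instances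
(by closed terms over the sub-signature) of the axioms. -/
inductive PE (B : Set Bool) (P : CSym F n → Prop) : CT F arF n → CT F arF n → Prop where
  | refl (t) : InSig F arF n P t → PE B P t t
  | symm {s t} : PE B P s t → PE B P t s
  | trans {s t u} : PE B P s t → PE B P t u → PE B P s u
  | congr (f : CSym F n) (ts us : Fin (CSym.arity arF f) → CT F arF n) : P f →
      (∀ i, PE B P (ts i) (us i)) → PE B P (.app f ts) (.app f us)
  | ax (b : Bool) (hb : b ∈ B) (u v : Tm (F b) (arF b) ℕ) (h : (u, v) ∈ Ax b)
      (σ : ℕ → CT F arF n) : (∀ m, InSig F arF n P (σ m)) →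
      PE B P ((embedOp F arF n b u).bind σ) ((embedOp F arF n b v).bind σ)

/-- The sub-signature consisting of the operations of the theories in `B`, all
generator constants `y₁,…,yₙ`, and the indeterminates `x_j` with `j ∈ J`. -/
def SigP (B : Set Bool) (J : Set ℕ) : CSym F n → Prop
  | .op b _ => b ∈ B
  | .gen _ => True
  | .ind j => j ∈ J

/-- The (combination of the) theories in `B` is non-trivial: it does not prove
the equation `x = y` for distinct variables (equivalently, it does not identify
two distinct indeterminate constants). -/
def Nontriv (B : Set Bool) : Prop :=
  ¬ PE F arF n Ax B (SigP F n B Set.univ) (xTm F arF n 1) (xTm F arF n 2)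

/-- Membership of (the class of) `t` in the logical isotropy group of the free
model on `n` generators of the combination of the theories in `B`: `t` is a
closed term over the signature extended by the constant `x` that is invertible
under substitution into `x` and commutes generically with every operation. -/
def GIso (B : Set Bool) (t : CT F arF n) : Prop :=
  InSig F arF n (SigP F n B {0}) t ∧
  (∃ tinv, InSig F arF n (SigP F n B {0}) tinv ∧
    PE F arF n Ax B (SigP F n B {0}) (substInd F arF n 0 tinv t) (xTm F arF n 0) ∧
    PE F arF n Ax B (SigP F n B {0}) (substInd F arF n 0 t tinv) (xTm F arF n 0)) ∧
  ∀ b, b ∈ B → ∀ g : F b,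
    PE F arF n Ax B (SigP F n B {j | 1 ≤ j ∧ j ≤ arF b g})
      (substInd F arF n 0 (.app (.op b g) (fun i => xTm F arF n (i.val + 1))) t)
      (.app (.op b g) (fun i => substInd F arF n 0 (xTm F arF n (i.val + 1)) t))

/-- `g` is a projection in `𝕋_b`. -/
def IsProj (b : Bool) (g : F b) : Prop :=
  ∃ i : Fin (arF b g),
    AxCong F arF Ax b (V := ℕ) (.app g (fun j => .var j.val)) (.var i.val)

/-- `g` is constant in `𝕋_b`: `𝕋_b` proves `g(y₁,…,y_m) = s` for pairwise
distinct variables none of which occurs in `s`. -/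
def IsConst (b : Bool) (g : F b) : Prop :=
  ∃ s : Tm (F b) (arF b) ℕ, s.VarsIn {m | arF b g ≤ m} ∧
    AxCong F arF Ax b (V := ℕ) (.app g (fun j => .var j.val)) s

end Setup4
section Models

variable (F : Bool → Type) (arF : ∀ b, F b → ℕ) (n : ℕ)
variable (Ax : ∀ b, Set (Tm (F b) (arF b) ℕ × Tm (F b) (arF b) ℕ))

/-- Evaluation of a `Σ_b`-term in a set equipped with operations. -/
def evalTm {α : Type} (ops : ∀ b (g : F b), (Fin (arF b g) → α) → α)
    (b : Bool) {V : Type} (ρ : V → α) : Tm (F b) (arF b) V → α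
  | .var v => ρ v
  | .app g ts => ops b g (fun i => evalTm ops b ρ (ts i))

/-- A (set-based) model of the combined theory `𝕋₁ + 𝕋₂`. -/
structure TModel where
  carrier : Type
  ops : ∀ b (g : F b), (Fin (arF b g) → carrier) → carrier
  sat : ∀ b u v, (u, v) ∈ Ax b → ∀ ρ : ℕ → carrier,
      evalTm F arF ops b ρ u = evalTm F arF ops b ρ v

/-- Homomorphisms of models. -/
@[ext]
structure TModelHom (M N : TModel F arF Ax) where
  toFun : M.carrier → N.carrier
  map_ops : ∀ b (g : F b) (args : Fin (arF b g) → M.carrier),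
      toFun (M.ops b g args) = N.ops b g (fun i => toFun (args i))

/-- The identity homomorphism. -/
def TModelHom.id (M : TModel F arF Ax) : TModelHom F arF Ax M M :=
  ⟨fun a => a, fun _ _ _ => rfl⟩

/-- Composition of homomorphisms. -/
def TModelHom.comp {M M' M'' : TModel F arF Ax} (h' : TModelHom F arF Ax M' M'')
    (h : TModelHom F arF Ax M M') : TModelHom F arF Ax M M'' :=
  ⟨fun a => h'.toFun (h.toFun a), fun b g args => by
    simp [h.map_ops, h'.map_ops]⟩

/-- `M` together with the `n` elements `gens` is a free model on `n`
generators: the universal property. -/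
def IsFreeOn (M : TModel F arF Ax) (gens : Fin n → M.carrier) : Prop :=
  ∀ (N : TModel F arF Ax) (a : Fin n → N.carrier),
    ∃! h : TModelHom F arF Ax M N, ∀ i, h.toFun (gens i) = a i

end Models

set_option linter.unusedVariables false
namespace NCR

open Tm CSym

variable {F : Bool → Type} {arF : ∀ b, F b → ℕ} {n : ℕ}
variable {Ax : ∀ b, Set (Tm (F b) (arF b) ℕ × Tm (F b) (arF b) ℕ)}

/-! ### Tm lemmas -/

theorem mapVar_comp {S : Type} {ar : S → ℕ} {V W X : Type} (f : V → W) (g : W → X) :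
    ∀ t : Tm S ar V, (t.mapVar f).mapVar g = t.mapVar (g ∘ f)
  | .var v => rfl
  | .app h ts => by
      simp only [Tm.mapVar]
      exact congrArg _ (funext fun k => mapVar_comp f g (ts k))

theorem mapVar_id {S : Type} {ar : S → ℕ} {V : Type} :
    ∀ t : Tm S ar V, t.mapVar (fun v => v) = t
  | .var v => rfl
  | .app h ts => by
      simp only [Tm.mapVar]
      exact congrArg _ (funext fun k => mapVar_id (ts k))

theorem mapVar_eq_bind {S : Type} {ar : S → ℕ} {V W : Type} (g : V → W) :
    ∀ t : Tm S ar V, t.mapVar g = t.bind (fun v => .var (g v))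
  | .var v => rfl
  | .app h ts => by
      simp only [Tm.mapVar, Tm.bind]
      exact congrArg _ (funext fun k => mapVar_eq_bind g (ts k))

theorem bind_bind {S : Type} {ar : S → ℕ} {V W X : Type}
    (σ : V → Tm S ar W) (τ : W → Tm S ar X) :
    ∀ t : Tm S ar V, (t.bind σ).bind τ = t.bind (fun v => (σ v).bind τ)
  | .var v => rfl
  | .app h ts => by
      simp only [Tm.bind]
      exact congrArg _ (funext fun k => bind_bind σ τ (ts k))

theorem bind_of_varsIn {S : Type} {ar : S → ℕ} {V : Type} {A : Set V}
    {σ : V → Tm S ar V} (hσ : ∀ v ∈ A, σ v = .var v) :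
    ∀ {t : Tm S ar V}, t.VarsIn A → t.bind σ = t
  | .var v, hv => hσ v hv
  | .app h ts, hv => by
      simp only [Tm.bind]
      exact congrArg _ (funext fun k => bind_of_varsIn hσ (hv k))

theorem varsIn_mono {S : Type} {ar : S → ℕ} {V : Type} {A B : Set V} (hAB : A ⊆ B) :
    ∀ {t : Tm S ar V}, t.VarsIn A → t.VarsIn B
  | .var v, hv => hAB hv
  | .app h ts, hv => fun k => varsIn_mono hAB (hv k)

theorem varsIn_mapVar {S : Type} {ar : S → ℕ} {V W : Type} {A : Set V} (g : V → W) :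
    ∀ {t : Tm S ar V}, t.VarsIn A → (t.mapVar g).VarsIn (g '' A)
  | .var v, hv => ⟨v, hv, rfl⟩
  | .app h ts, hv => fun k => varsIn_mapVar g (hv k)

/-! ### the renaming `rT` -/

/-- Renaming swapping the indeterminates `x₀` and `xᵢ`. -/
def rT (i : ℕ) : CT F arF n → CT F arF n
  | .var v => v.elim
  | .app (.op b f) ts => .app (.op b f) (fun k => rT i (ts k))
  | .app (.gen k) ts => .app (.gen k) ts
  | .app (.ind j) ts => .app (.ind (if j = 0 then i else if j = i then 0 else j)) ts

/-- `bsig b` is the signature index of theory `b`. -/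
def bsig (b : Bool) : Fin 4 := if b then 1 else 0

theorem sig_op (b : Bool) (g : F b) : (CSym.sig (n := n) (.op b g)) = bsig b := by
  cases b <;> rfl

theorem bsig_ne_two (b : Bool) : bsig b ≠ 2 := by cases b <;> simp [bsig]
theorem bsig_ne_three (b : Bool) : bsig b ≠ 3 := by cases b <;> simp [bsig]

theorem rootSym_rT (i : ℕ) : ∀ t : CT F arF n,
    (rootSym F arF n (rT i t)).sig = (rootSym F arF n t).sig
  | .var v => v.elim
  | .app (.op b f) ts => rfl
  | .app (.gen k) ts => rfl
  | .app (.ind j) ts => rfl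

theorem rootSym_rT_op (i : ℕ) {b : Bool} {g : F b} : ∀ {t : CT F arF n},
    rootSym F arF n t = .op b g → rootSym F arF n (rT i t) = .op b g
  | .var v, _ => v.elim
  | .app (.op b' f) ts, h => h
  | .app (.gen k) ts, h => by exact absurd h (by simp [rootSym])
  | .app (.ind j) ts, h => by exact absurd h (by simp [rootSym])

theorem app_ind_congr {j a : ℕ}
    (ts : Fin (CSym.arity arF (CSym.ind (F := F) (n := n) j)) → CT F arF n) (h : a = j) :
    (Tm.app (CSym.ind a) ts : CT F arF n) = Tm.app (CSym.ind j) ts := by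
  subst h; rfl

theorem rT_rT (i : ℕ) (hi : i ≠ 0) : ∀ t : CT F arF n, rT i (rT i t) = t
  | .var v => v.elim
  | .app (.op b f) ts => by
      simp only [rT]
      exact congrArg _ (funext fun k => rT_rT i hi (ts k))
  | .app (.gen k) ts => rfl
  | .app (.ind j) ts => by
      rcases eq_or_ne j 0 with rfl | hj0
      · simp only [rT]; exact app_ind_congr _ (by simp [hi])
      · rcases eq_or_ne j i with rfl | hji
        · simp only [rT]; exact app_ind_congr _ (by simp [hj0])
        · simp only [rT]; exact app_ind_congr _ (by simp [hj0, hji])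


/-! ### layerize lemmas -/

theorem layerize_op_self (b : Bool) (f : F b) (ts : Fin (arF b f) → CT F arF n) :
    layerize F arF n b (.app (.op b f) ts) = .app f (fun k => layerize F arF n b (ts k)) := by
  cases b <;> rfl

theorem layerize_op_ne {b b' : Bool} (h : b' ≠ b) (f : F b') (ts : Fin (arF b' f) → CT F arF n) :
    layerize F arF n b (.app (.op b' f) ts) = .var (.app (.op b' f) ts) := by
  cases b <;> cases b' <;> first | rfl | exact absurd rfl h

theorem layerize_gen (b : Bool) (k : Fin n) (ts : Fin 0 → CT F arF n) :
    layerize F arF n b (.app (.gen k) ts) = .var (.app (.gen k) ts) := rfl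

theorem layerize_ind (b : Bool) (j : ℕ) (ts : Fin 0 → CT F arF n) :
    layerize F arF n b (.app (.ind j) ts) = .var (.app (.ind j) ts) := rfl

theorem layerize_rT (i : ℕ) (b : Bool) : ∀ t : CT F arF n,
    layerize F arF n b (rT i t) = (layerize F arF n b t).mapVar (rT i)
  | .var v => v.elim
  | .app (.op b' f) ts => by
      rcases eq_or_ne b' b with rfl | hne
      · show layerize F arF n b' (.app (.op b' f) (fun k => rT i (ts k))) = _
        erw [layerize_op_self, layerize_op_self]
        simp only [Tm.mapVar]
        exact congrArg _ (funext fun k => layerize_rT i b' (ts k))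
      · show layerize F arF n b (.app (.op b' f) (fun k => rT i (ts k))) = _
        erw [layerize_op_ne hne, layerize_op_ne hne]
        rfl
  | .app (.gen k) ts => rfl
  | .app (.ind j) ts => rfl

/-! ### aliens lemmas -/

theorem mem_aliensUnder_sig {k : Fin 4} : ∀ {t u : CT F arF n},
    u ∈ aliensUnder F arF n k t → (rootSym F arF n u).sig ≠ k
  | .var v, u, h => v.elim
  | .app f ts, u, h => by
      by_cases hf : f.sig = k
      · rw [aliensUnder, if_pos hf] at h
        rcases Set.mem_iUnion.mp h with ⟨j, hj⟩
        exact mem_aliensUnder_sig hj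
      · rw [aliensUnder, if_neg hf] at h
        rcases h with rfl
        exact hf

theorem varsIn_layerize (b : Bool) : ∀ t : CT F arF n,
    (layerize F arF n b t).VarsIn (aliensUnder F arF n (bsig b) t)
  | .var v => v.elim
  | .app (.op b' f) ts => by
      rcases eq_or_ne b' b with rfl | hne
      · erw [layerize_op_self]
        intro j
        refine varsIn_mono ?_ (varsIn_layerize b' (ts j))
        intro u hu
        rw [aliensUnder, if_pos (sig_op b' f)]
        exact Set.mem_iUnion.mpr ⟨j, hu⟩
      · erw [layerize_op_ne hne]
        show _ ∈ aliensUnder F arF n (bsig b) (.app (.op b' f) ts)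
        rw [aliensUnder, if_neg]
        · exact rfl
        · rw [sig_op]
          cases b <;> cases b' <;> first | exact absurd rfl hne | simp [bsig]
  | .app (.gen k) ts => by
      erw [layerize_gen]
      show _ ∈ aliensUnder F arF n (bsig b) (.app (.gen k) ts)
      rw [aliensUnder, if_neg]
      · exact rfl
      · exact fun h => bsig_ne_two b h.symm
  | .app (.ind j) ts => by
      erw [layerize_ind]
      show _ ∈ aliensUnder F arF n (bsig b) (.app (.ind j) ts)
      rw [aliensUnder, if_neg]
      · exact rfl
      · exact fun h => bsig_ne_three b h.symm

theorem aliensSet_op (b : Bool) (g : F b) (ts : Fin (arF b g) → CT F arF n) :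
    aliensSet F arF n (.app (.op b g) ts) = ⋃ j, aliensUnder F arF n (bsig b) (ts j) := by
  show (⋃ j, aliensUnder F arF n (CSym.sig (CSym.op b g)) (ts j)) = _
  rw [sig_op]

theorem varsIn_absQ (b : Bool) (g : F b) (ts : Fin (arF b g) → CT F arF n) :
    (absQ F arF n Ax b (.app (.op b g) ts)).VarsIn
      ((Quot.mk (Iso F arF n Ax)) '' aliensSet F arF n (.app (.op b g) ts)) := by
  refine varsIn_mapVar _ (varsIn_mono ?_ (varsIn_layerize b _))
  intro u hu
  replace hu : u ∈ (if (CSym.op b g : CSym F n).sig = bsig b then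
      ⋃ i, aliensUnder F arF n (bsig b) (ts i) else {Tm.app (CSym.op b g) ts}) := hu
  rw [if_pos (sig_op b g)] at hu
  rw [aliensSet_op]
  exact hu


theorem mapVar_bind {S : Type} {ar : S → ℕ} {V W X : Type}
    (σ : V → Tm S ar W) (g : W → X) :
    ∀ t : Tm S ar V, (t.bind σ).mapVar g = t.bind (fun v => (σ v).mapVar g)
  | .var v => rfl
  | .app h ts => by
      simp only [Tm.bind, Tm.mapVar]
      exact congrArg _ (funext fun k => mapVar_bind σ g (ts k))

/-! ### AxCong lemmas -/

theorem axCong_bind {b : Bool} {V W : Type} (σ : V → Tm (F b) (arF b) W)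
    {s t : Tm (F b) (arF b) V} (h : AxCong F arF Ax b s t) :
    AxCong F arF Ax b (s.bind σ) (t.bind σ) := by
  induction h with
  | refl t => exact AxCong.refl _
  | symm _ ih => exact ih.symm
  | trans _ _ ih1 ih2 => exact ih1.trans ih2
  | congr g ts us _ ih => exact AxCong.congr g _ _ ih
  | ax u v hm σ' =>
      rw [bind_bind, bind_bind]
      exact AxCong.ax u v hm _

theorem axCong_mapVar {b : Bool} {V W : Type} (g : V → W)
    {s t : Tm (F b) (arF b) V} (h : AxCong F arF Ax b s t) :
    AxCong F arF Ax b (s.mapVar g) (t.mapVar g) := by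
  rw [mapVar_eq_bind, mapVar_eq_bind]
  exact axCong_bind _ h

/-- Lift `LEq` (congruence with `Iso`-relating of constants) to `AxCong` on classes. -/
theorem leq_axCong {b : Bool} {s t : Tm (F b) (arF b) (CT F arF n)}
    (h : LEq F arF n Ax b s t) :
    AxCong F arF Ax b (s.mapVar (Quot.mk (Iso F arF n Ax)))
      (t.mapVar (Quot.mk (Iso F arF n Ax))) := by
  refine LEq.rec (motive_1 := fun _ _ _ => True)
    (motive_2 := fun b s t _ => AxCong F arF Ax b (s.mapVar (Quot.mk (Iso F arF n Ax)))
      (t.mapVar (Quot.mk (Iso F arF n Ax))))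
    ?_ ?_ ?_ ?_ ?_ ?_ ?_ ?_ h
  · exact fun _ _ _ _ _ _ _ => trivial
  · exact fun _ _ => trivial
  · exact fun b t => AxCong.refl _
  · exact fun _ ih => ih.symm
  · exact fun _ _ ih1 ih2 => ih1.trans ih2
  · intro b g ts us _ ih
    simp only [Tm.mapVar]
    exact AxCong.congr g _ _ ih
  · intro b s t hst _
    simp only [Tm.mapVar]
    rw [Quot.sound hst]
    exact AxCong.refl _
  · intro b u v hm σ
    rw [mapVar_bind, mapVar_bind]
    exact AxCong.ax u v hm _

/-! ### equivariance of Iso/LEq under `rT` -/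

theorem iso_rT (i : ℕ) {u v : CT F arF n} (h : Iso F arF n Ax u v) :
    Iso F arF n Ax (rT i u) (rT i v) := by
  refine Iso.rec (motive_1 := fun u v _ => Iso F arF n Ax (rT i u) (rT i v))
    (motive_2 := fun b s t _ => LEq F arF n Ax b (s.mapVar (rT i)) (t.mapVar (rT i)))
    ?_ ?_ ?_ ?_ ?_ ?_ ?_ ?_ h
  · intro b u v hu hv hl ih
    obtain ⟨g, hg⟩ := hu
    obtain ⟨g', hg'⟩ := hv
    refine Iso.opEq b _ _ ⟨g, rootSym_rT_op i hg⟩ ⟨g', rootSym_rT_op i hg'⟩ ?_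
    rw [layerize_rT, layerize_rT]
    exact ih
  · intro t ha
    refine Iso.constEq _ ?_
    rw [rootSym_rT]
    exact ha
  · exact fun b t => LEq.refl b _
  · exact fun _ ih => ih.symm
  · exact fun _ _ ih1 ih2 => ih1.trans ih2
  · intro b g ts us _ ih
    simp only [Tm.mapVar]
    exact LEq.congr b g _ _ ih
  · intro b s t hst ih
    simp only [Tm.mapVar]
    exact LEq.varRel b _ _ ih
  · intro b u v hm σ
    rw [mapVar_bind, mapVar_bind]
    exact LEq.ax b u v hm _

theorem leq_rT (i : ℕ) {b : Bool} {s t : Tm (F b) (arF b) (CT F arF n)}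
    (h : LEq F arF n Ax b s t) :
    LEq F arF n Ax b (s.mapVar (rT i)) (t.mapVar (rT i)) := by
  refine LEq.rec (motive_1 := fun u v _ => Iso F arF n Ax (rT i u) (rT i v))
    (motive_2 := fun b s t _ => LEq F arF n Ax b (s.mapVar (rT i)) (t.mapVar (rT i)))
    ?_ ?_ ?_ ?_ ?_ ?_ ?_ ?_ h
  · intro b u v hu hv hl ih
    obtain ⟨g, hg⟩ := hu
    obtain ⟨g', hg'⟩ := hv
    refine Iso.opEq b _ _ ⟨g, rootSym_rT_op i hg⟩ ⟨g', rootSym_rT_op i hg'⟩ ?_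
    rw [layerize_rT, layerize_rT]
    exact ih
  · intro t ha
    refine Iso.constEq _ ?_
    rw [rootSym_rT]
    exact ha
  · exact fun b t => LEq.refl b _
  · exact fun _ ih => ih.symm
  · exact fun _ _ ih1 ih2 => ih1.trans ih2
  · intro b g ts us _ ih
    simp only [Tm.mapVar]
    exact LEq.congr b g _ _ ih
  · intro b s t hst ih
    simp only [Tm.mapVar]
    exact LEq.varRel b _ _ ih
  · intro b u v hm σ
    rw [mapVar_bind, mapVar_bind]
    exact LEq.ax b u v hm _

/-- The renaming on the combined algebra. -/
def RQ (Ax : ∀ b, Set (Tm (F b) (arF b) ℕ × Tm (F b) (arF b) ℕ)) (i : ℕ) :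
    Alg F arF n Ax → Alg F arF n Ax :=
  Quot.lift (fun u => Quot.mk _ (rT i u)) (fun _ _ h => Quot.sound (iso_rT i h))

@[simp] theorem RQ_mk (i : ℕ) (a : CT F arF n) :
    RQ Ax i (Quot.mk (Iso F arF n Ax) a) = Quot.mk (Iso F arF n Ax) (rT i a) := rfl

theorem RQ_RQ (i : ℕ) (hi : i ≠ 0) (q : Alg F arF n Ax) : RQ Ax i (RQ Ax i q) = q := by
  induction q using Quot.ind with
  | _ a => rw [RQ_mk, RQ_mk, rT_rT i hi]

theorem absQ_rT (i : ℕ) (b : Bool) (t : CT F arF n) :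
    absQ F arF n Ax b (rT i t) = (absQ F arF n Ax b t).mapVar (RQ Ax i) := by
  show (layerize F arF n b (rT i t)).mapVar _ = _
  rw [layerize_rT, mapVar_comp, absQ, mapVar_comp]
  rfl


/-! ### EqvGen lemmas -/

theorem iso_sig {u v : CT F arF n} (h : Iso F arF n Ax u v) :
    (rootSym F arF n u).sig = (rootSym F arF n v).sig := by
  cases h with
  | opEq b u v hu hv _ =>
      obtain ⟨g, hg⟩ := hu
      obtain ⟨g', hg'⟩ := hv
      rw [hg, hg', sig_op, sig_op]
  | constEq t _ => rfl

theorem eqvGen_sig {u v : CT F arF n} (h : Relation.EqvGen (Iso F arF n Ax) u v) :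
    (rootSym F arF n u).sig = (rootSym F arF n v).sig := by
  induction h with
  | rel _ _ h => exact iso_sig h
  | refl => rfl
  | symm _ _ _ ih => exact ih.symm
  | trans _ _ _ _ _ ih1 ih2 => exact ih1.trans ih2

theorem mk_sig {u v : CT F arF n}
    (h : Quot.mk (Iso F arF n Ax) u = Quot.mk (Iso F arF n Ax) v) :
    (rootSym F arF n u).sig = (rootSym F arF n v).sig :=
  eqvGen_sig (Quot.eq.mp h)

theorem eqvGen_const_eq {u v : CT F arF n} (h : Relation.EqvGen (Iso F arF n Ax) u v) :
    ((rootSym F arF n u).sig = 2 ∨ (rootSym F arF n u).sig = 3) → u = v := by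
  induction h with
  | rel a b h =>
      intro hs
      cases h with
      | opEq b' u v hu hv _ =>
          obtain ⟨g, hg⟩ := hu
          rw [hg, sig_op] at hs
          rcases hs with hs | hs
          · exact absurd hs (bsig_ne_two b')
          · exact absurd hs (bsig_ne_three b')
      | constEq t _ => rfl
  | refl => exact fun _ => rfl
  | symm a b hab ih =>
      intro hs
      rw [eqvGen_sig (Relation.EqvGen.symm _ _ hab)] at hs
      exact (ih hs).symm
  | trans a b c hab hbc ih1 ih2 =>
      intro hs
      have h1 := ih1 hs
      rw [eqvGen_sig hab] at hs
      exact h1.trans (ih2 hs)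

theorem mk_const_eq {u v : CT F arF n}
    (h : Quot.mk (Iso F arF n Ax) u = Quot.mk (Iso F arF n Ax) v)
    (hs : (rootSym F arF n u).sig = 2 ∨ (rootSym F arF n u).sig = 3) : u = v :=
  eqvGen_const_eq (Quot.eq.mp h) hs

theorem mk_xTm_ne {Ax : ∀ b, Set (Tm (F b) (arF b) ℕ × Tm (F b) (arF b) ℕ)}
    {j k : ℕ} (hjk : j ≠ k) :
    Quot.mk (Iso F arF n Ax) (xTm F arF n j) ≠ Quot.mk (Iso F arF n Ax) (xTm F arF n k) := by
  intro h
  have := mk_const_eq h (Or.inr rfl)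
  rw [xTm, xTm] at this
  injection this with h1 h2
  exact hjk (by injection h1)

/-! ### layerize respects Iso -/

theorem layerize_root_ne {b b' : Bool} (hne : b' ≠ b) {t : CT F arF n} {g : F b'}
    (h : rootSym F arF n t = .op b' g) :
    layerize F arF n b t = .var t := by
  cases t with
  | var v => exact v.elim
  | app f ts =>
      have : f = .op b' g := h
      subst this
      exact layerize_op_ne hne g ts

theorem leq_layerize_of_iso (b : Bool) {u v : CT F arF n} (h : Iso F arF n Ax u v) :
    LEq F arF n Ax b (layerize F arF n b u) (layerize F arF n b v) := by
  cases h with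
  | opEq b' u v hu hv hl =>
      rcases eq_or_ne b' b with rfl | hne
      · exact hl
      · obtain ⟨g, hg⟩ := hu
        obtain ⟨g', hg'⟩ := hv
        rw [layerize_root_ne hne hg, layerize_root_ne hne hg']
        exact LEq.varRel b u v (Iso.opEq b' u v ⟨g, hg⟩ ⟨g', hg'⟩ hl)
  | constEq t _ => exact LEq.refl b _

theorem leq_layerize_of_eqvGen (b : Bool) {u v : CT F arF n}
    (h : Relation.EqvGen (Iso F arF n Ax) u v) :
    LEq F arF n Ax b (layerize F arF n b u) (layerize F arF n b v) := by
  induction h with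
  | rel _ _ h => exact leq_layerize_of_iso b h
  | refl => exact LEq.refl b _
  | symm _ _ _ ih => exact ih.symm
  | trans _ _ _ _ _ ih1 ih2 => exact ih1.trans ih2

theorem iso_congr {b : Bool} {g : F b} {us vs : Fin (arF b g) → CT F arF n}
    (h : ∀ j, Relation.EqvGen (Iso F arF n Ax) (us j) (vs j)) :
    Iso F arF n Ax (.app (.op b g) us) (.app (.op b g) vs) := by
  refine Iso.opEq b _ _ ⟨g, rfl⟩ ⟨g, rfl⟩ ?_
  rw [layerize_op_self, layerize_op_self]
  exact LEq.congr b g _ _ (fun j => leq_layerize_of_eqvGen b (h j))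

theorem mk_congr {b : Bool} {g : F b} {us vs : Fin (arF b g) → CT F arF n}
    (h : ∀ j, Quot.mk (Iso F arF n Ax) (us j) = Quot.mk (Iso F arF n Ax) (vs j)) :
    Quot.mk (Iso F arF n Ax) (.app (.op b g) us) = Quot.mk (Iso F arF n Ax) (.app (.op b g) vs) :=
  Quot.sound (iso_congr fun j => Quot.eq.mp (h j))

/-! ### allAliensSet lemmas -/

theorem allAliensSet_app (f : CSym F n) (ts : Fin (CSym.arity arF f) → CT F arF n) :
    allAliensSet F arF n (.app f ts) =
      ⋃ j, (if (rootSym F arF n (ts j)).sig = f.sig then (∅ : Set _) else {ts j}) ∪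
        allAliensSet F arF n (ts j) := rfl

theorem allAliensSet_sub (f : CSym F n) (ts : Fin (CSym.arity arF f) → CT F arF n) (j) :
    allAliensSet F arF n (ts j) ⊆ allAliensSet F arF n (.app f ts) := by
  intro u hu
  rw [allAliensSet_app]
  exact Set.mem_iUnion.mpr ⟨j, Or.inr hu⟩

theorem alien_mem_allAliens (f : CSym F n) (ts : Fin (CSym.arity arF f) → CT F arF n) (j)
    (h : (rootSym F arF n (ts j)).sig ≠ f.sig) :
    ts j ∈ allAliensSet F arF n (.app f ts) := by
  rw [allAliensSet_app]
  exact Set.mem_iUnion.mpr ⟨j, Or.inl (by rw [if_neg h]; rfl)⟩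

theorem allAliens_trans : ∀ {t u : CT F arF n}, u ∈ allAliensSet F arF n t →
    allAliensSet F arF n u ⊆ allAliensSet F arF n t
  | .var v, u, h => v.elim
  | .app f ts, u, h => by
      rw [allAliensSet_app] at h
      rcases Set.mem_iUnion.mp h with ⟨j, hj⟩
      rcases hj with hj | hj
      · by_cases hc : (rootSym F arF n (ts j)).sig = f.sig
        · rw [if_pos hc] at hj; exact absurd hj (Set.notMem_empty u)
        · rw [if_neg hc] at hj
          rcases hj with rfl
          exact allAliensSet_sub f ts j
      · exact (allAliens_trans hj).trans (allAliensSet_sub f ts j)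

theorem allAliensSet_rT (i : ℕ) : ∀ t : CT F arF n,
    allAliensSet F arF n (rT i t) = rT i '' allAliensSet F arF n t
  | .var v => v.elim
  | .app (.op b f) ts => by
      show allAliensSet F arF n (.app (.op b f) (fun k => rT i (ts k))) = _
      rw [allAliensSet_app, allAliensSet_app, Set.image_iUnion]
      refine Set.iUnion_congr fun j => ?_
      rw [Set.image_union, allAliensSet_rT i (ts j)]
      congr 1
      rw [rootSym_rT]
      split_ifs with hc
      · simp
      · simp
  | .app (.gen k) ts => by
      show allAliensSet F arF n (.app (.gen k) ts) = _
      rw [allAliensSet_app]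
      haveI : IsEmpty (Fin (CSym.arity arF (CSym.gen (F := F) k))) :=
        inferInstanceAs (IsEmpty (Fin 0))
      rw [Set.iUnion_of_empty, Set.image_empty]
  | .app (.ind j) ts => by
      show allAliensSet F arF n (.app (.ind _) ts) = _
      rw [allAliensSet_app]
      haveI : IsEmpty (Fin (CSym.arity arF (CSym.ind (F := F) (n := n) j))) :=
        inferInstanceAs (IsEmpty (Fin 0))
      rw [Set.iUnion_of_empty, Set.image_empty]

/-! ### rT fixes ind-free terms; substInd as rT -/

theorem rT_eq_self (i : ℕ) {P : CSym F n → Prop} (hP : ∀ j, ¬ P (.ind j)) :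
    ∀ {t : CT F arF n}, InSig F arF n P t → rT i t = t
  | .var v, _ => v.elim
  | .app (.op b f) ts, h => by
      simp only [rT]
      exact congrArg _ (funext fun k => rT_eq_self i hP (h.2 k))
  | .app (.gen k) ts, _ => rfl
  | .app (.ind j) ts, h => absurd h.1 (hP j)

theorem substInd_eq_rT (i : ℕ) (hi : i ≠ 0) :
    ∀ {t : CT F arF n}, InSig F arF n (SigP F n Set.univ {0}) t →
      substInd F arF n 0 (xTm F arF n i) t = rT i t
  | .var v, _ => v.elim
  | .app (.op b f) ts, h => by
      simp only [substInd, rT]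
      exact congrArg _ (funext fun k => substInd_eq_rT i hi (h.2 k))
  | .app (.gen k) ts, h => by
      simp only [substInd, rT]
      exact congrArg _ (funext fun k => Fin.elim0 k)
  | .app (.ind j) ts, h => by
      have hj : j = 0 := h.1
      subst hj
      simp only [substInd, rT, xTm, if_pos rfl, if_true]
      exact congrArg _ (funext fun k => Fin.elim0 k)


/-! ### interp unfolding -/

/-- The canonical representative-built term used in `interp` at an op node. -/
noncomputable def Ncan (Ax : ∀ b, Set (Tm (F b) (arF b) ℕ × Tm (F b) (arF b) ℕ)) (b : Bool) (g : F b)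
    (ts : Fin (arF b g) → CT F arF n) : CT F arF n :=
  .app (.op b g) (fun j => (interp F arF n Ax (ts j)).out)

/-- The collapsing condition in `interp`. -/
def Cond (Ax : ∀ b, Set (Tm (F b) (arF b) ℕ × Tm (F b) (arF b) ℕ)) (b : Bool) (g : F b)
    (ts : Fin (arF b g) → CT F arF n) : Prop :=
  ∃ u, u ∈ aliensSet F arF n (Ncan Ax b g ts) ∧
    AxCong F arF Ax b (absQ F arF n Ax b (Ncan Ax b g ts))
      (.var (Quot.mk (Iso F arF n Ax) u))

theorem interp_op_pos {b : Bool} {g : F b} {ts : Fin (arF b g) → CT F arF n}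
    (hc : Cond Ax b g ts) :
    interp F arF n Ax (.app (.op b g) ts) = Quot.mk (Iso F arF n Ax) hc.choose := by
  rw [interp.eq_def]
  exact dif_pos hc

theorem interp_op_neg {b : Bool} {g : F b} {ts : Fin (arF b g) → CT F arF n}
    (hc : ¬ Cond Ax b g ts) :
    interp F arF n Ax (.app (.op b g) ts) = Quot.mk (Iso F arF n Ax) (Ncan Ax b g ts) := by
  rw [interp.eq_def]
  exact dif_neg hc

theorem interp_gen (k : Fin n) (ts : Fin (CSym.arity arF (CSym.gen (F := F) k)) → CT F arF n) :
    interp F arF n Ax (.app (.gen k) ts) = Quot.mk (Iso F arF n Ax) (.app (.gen k) ts) := by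
  rw [interp]
  intro b' f' ts' h
  injection h with h1 _
  cases h1

theorem interp_ind (j : ℕ) (ts : Fin (CSym.arity arF (CSym.ind (F := F) (n := n) j)) → CT F arF n) :
    interp F arF n Ax (.app (.ind j) ts) = Quot.mk (Iso F arF n Ax) (.app (.ind j) ts) := by
  rw [interp]
  intro b' f' ts' h
  injection h with h1 _
  cases h1


theorem ncan_def (b : Bool) (g : F b) (ts : Fin (arF b g) → CT F arF n) :
    Ncan Ax b g ts = .app (.op b g) (fun j => (interp F arF n Ax (ts j)).out) := rfl

theorem mem_aliensSet_op_sig {b : Bool} {g : F b} {ts : Fin (arF b g) → CT F arF n}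
    {u : CT F arF n} (h : u ∈ aliensSet F arF n (.app (.op b g) ts)) :
    (rootSym F arF n u).sig ≠ bsig b := by
  rw [aliensSet_op] at h
  rcases Set.mem_iUnion.mp h with ⟨j, hj⟩
  exact mem_aliensUnder_sig hj

theorem mem_aliensSet_ncan_sig {b : Bool} {g : F b} {ts : Fin (arF b g) → CT F arF n}
    {u : CT F arF n} (h : u ∈ aliensSet F arF n (Ncan Ax b g ts)) :
    (rootSym F arF n u).sig ≠ bsig b :=
  mem_aliensSet_op_sig (show u ∈ aliensSet F arF n
    (.app (.op b g) (fun j => (interp F arF n Ax (ts j)).out)) from h)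

theorem aliensUnder_root_ne {k : Fin 4} : ∀ {u : CT F arF n},
    (rootSym F arF n u).sig ≠ k → aliensUnder F arF n k u = {u}
  | .var v, _ => v.elim
  | .app f ts, h => by
      rw [aliensUnder]
      exact if_neg h

theorem bsig_inj {b b' : Bool} (h : bsig b = bsig b') : b = b' := by
  cases b <;> cases b' <;> first | rfl | exact absurd h (by simp [bsig])

theorem out_sig_of_eq {q : Alg F arF n Ax} {w : CT F arF n}
    (h : q = Quot.mk (Iso F arF n Ax) w) :
    (rootSym F arF n q.out).sig = (rootSym F arF n w).sig :=
  mk_sig (by rw [Quot.out_eq, h])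

/-! ### the degenerate situation `VC` -/

/-- Theory `b` identifies two distinct classes (as variables); this makes
`AxCong` total. -/
def VC (n : ℕ) (Ax : ∀ b, Set (Tm (F b) (arF b) ℕ × Tm (F b) (arF b) ℕ)) (b : Bool) : Prop :=
  ∃ α β : Alg F arF n Ax, α ≠ β ∧ AxCong F arF Ax b (.var α) (.var β)

theorem vc_total {b : Bool} (h : VC n Ax b)
    (P Q : Tm (F b) (arF b) (Alg F arF n Ax)) : AxCong F arF Ax b P Q := by
  classical
  obtain ⟨α, β, hne, hax⟩ := h
  have hb := axCong_bind (fun γ => if γ = α then P else if γ = β then Q else .var γ) hax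
  simp only [Tm.bind, if_pos rfl, if_neg (Ne.symm hne)] at hb
  exact hb

theorem not_cond_of_nc {b : Bool} {g : F b} {ts : Fin (arF b g) → CT F arF n}
    (h : interp F arF n Ax (.app (.op b g) ts) =
      Quot.mk (Iso F arF n Ax) (.app (.op b g) ts)) :
    ¬ Cond Ax b g ts := by
  intro hc
  rw [interp_op_pos hc] at h
  have h1 := mk_sig h
  have h2 := mem_aliensSet_ncan_sig hc.choose_spec.1
  exact h2 (h1.trans (sig_op b g))

theorem not_cond_of_nc' {b : Bool} {g : F b} {ts : Fin (arF b g) → CT F arF n}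
    {t : CT F arF n} (heq : t = .app (.op b g) ts)
    (h : interp F arF n Ax t = Quot.mk (Iso F arF n Ax) t) :
    ¬ Cond Ax b g ts := by
  rw [heq] at h
  exact not_cond_of_nc h

/-- In the degenerate situation, a non-collapsing op-rooted term with
non-collapsing aliens is entirely within its root theory. -/
theorem insig_of_vc {b : Bool} (hvc : VC n Ax b) :
    ∀ t : CT F arF n,
      (∀ u ∈ allAliensSet F arF n t, interp F arF n Ax u = Quot.mk (Iso F arF n Ax) u) →
      (∀ (g : F b) (ts : Fin (arF b g) → CT F arF n), t = .app (.op b g) ts →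
        ¬ Cond Ax b g ts) →
      (∃ (g : F b) (ts : Fin (arF b g) → CT F arF n), t = .app (.op b g) ts) →
      InSig F arF n (fun f => f.sig = bsig b) t := by
  intro t
  induction t with
  | var v => exact fun _ _ h => v.elim
  | app f ss ih =>
    intro hDA hnc hex
    obtain ⟨g, ts, heq⟩ := hex
    injection heq with h1 h2
    subst h1
    obtain rfl : ss = ts := eq_of_heq h2
    have hC : ¬ Cond Ax b g ss := hnc g ss rfl
    have hempty : aliensSet F arF n (Ncan Ax b g ss) = ∅ := by
      by_contra hne
      obtain ⟨w, hw⟩ := Set.nonempty_iff_ne_empty.mpr hne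
      exact hC ⟨w, hw, vc_total hvc _ _⟩
    have hout : ∀ j, aliensUnder F arF n (bsig b) ((interp F arF n Ax (ss j)).out) = ∅ := by
      intro j
      have hempty := (aliensSet_op b g (fun j => (interp F arF n Ax (ss j)).out)).symm.trans hempty
      exact Set.iUnion_eq_empty.mp hempty j
    have hsig : ∀ j, (rootSym F arF n ((interp F arF n Ax (ss j)).out)).sig = bsig b := by
      intro j
      by_contra hne
      have h3 := aliensUnder_root_ne (k := bsig b) hne
      rw [hout j] at h3
      exact (Set.singleton_ne_empty _) h3.symm
    refine ⟨sig_op b g, fun j => ?_⟩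
    cases hsj : ss j with
    | var v => exact v.elim
    | app f' ss' =>
      cases f' with
      | gen k =>
          exfalso
          have h3 : (rootSym F arF n ((interp F arF n Ax (ss j)).out)).sig = 2 := by
            rw [hsj, out_sig_of_eq (interp_gen k ss')]
            rfl
          exact bsig_ne_two b ((hsig j).symm.trans h3)
      | ind j' =>
          exfalso
          have h3 : (rootSym F arF n ((interp F arF n Ax (ss j)).out)).sig = 3 := by
            rw [hsj, out_sig_of_eq (interp_ind j' ss')]
            rfl
          exact bsig_ne_three b ((hsig j).symm.trans h3)
      | op b' g' =>
          rcases eq_or_ne b' b with rfl | hbb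
          · have ihj := ih j
            rw [hsj] at ihj
            refine ihj ?_ ?_ ⟨g', ss', rfl⟩
            · intro u hu
              refine hDA u (allAliensSet_sub _ ss j ?_)
              rw [hsj]
              exact hu
            · intro g'' ts'' heq2 hcond
              have h4 : (rootSym F arF n ((interp F arF n Ax (ss j)).out)).sig =
                  (rootSym F arF n hcond.choose).sig := by
                rw [hsj, heq2, out_sig_of_eq (interp_op_pos hcond)]
              have h5 := mem_aliensSet_ncan_sig hcond.choose_spec.1
              exact h5 (h4.symm.trans (hsig j))
          · exfalso
            have halien : ss j ∈ allAliensSet F arF n (.app (.op b g) ss) := by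
              refine alien_mem_allAliens _ ss j ?_
              rw [hsj]
              show (CSym.op b' g').sig ≠ (CSym.op b g).sig
              rw [sig_op, sig_op]
              exact fun hh => hbb (bsig_inj hh)
            have hncj := hDA _ halien
            have h3 : (rootSym F arF n ((interp F arF n Ax (ss j)).out)).sig = bsig b' := by
              rw [out_sig_of_eq hncj, hsj]
              exact sig_op b' g'
            exact hbb (bsig_inj (h3.symm.trans (hsig j)))


theorem varsIn_absQ_ncan (b : Bool) (g : F b) (ts : Fin (arF b g) → CT F arF n) :
    (absQ F arF n Ax b (Ncan Ax b g ts)).VarsIn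
      ((Quot.mk (Iso F arF n Ax)) '' aliensSet F arF n (Ncan Ax b g ts)) :=
  varsIn_absQ b g fun j => (interp F arF n Ax (ts j)).out

theorem cond_of_axCong_var {b : Bool} {g : F b} {ts : Fin (arF b g) → CT F arF n}
    (α : Alg F arF n Ax)
    (h : AxCong F arF Ax b (absQ F arF n Ax b (Ncan Ax b g ts)) (.var α))
    (w : CT F arF n) (hw : w ∈ aliensSet F arF n (Ncan Ax b g ts)) :
    Cond Ax b g ts := by
  classical
  by_cases hα : ∃ u, u ∈ aliensSet F arF n (Ncan Ax b g ts) ∧ Quot.mk (Iso F arF n Ax) u = α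
  · obtain ⟨u, hu, rfl⟩ := hα
    exact ⟨u, hu, h⟩
  · refine ⟨w, hw, ?_⟩
    have hb := axCong_bind
      (fun γ => if γ = α then Tm.var (Quot.mk (Iso F arF n Ax) w) else .var γ) h
    have e1 : (absQ F arF n Ax b (Ncan Ax b g ts)).bind
        (fun γ => if γ = α then Tm.var (Quot.mk (Iso F arF n Ax) w) else .var γ) =
        absQ F arF n Ax b (Ncan Ax b g ts) := by
      refine bind_of_varsIn ?_ (varsIn_absQ_ncan b g ts)
      rintro v ⟨u, hu, rfl⟩
      rw [if_neg]
      intro hv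
      exact hα ⟨u, hu, hv⟩
    rw [e1] at hb
    simpa [Tm.bind] using hb

theorem vc_of_not_cond {b : Bool} {g : F b} {ts : Fin (arF b g) → CT F arF n}
    (α : Alg F arF n Ax)
    (h : AxCong F arF Ax b (absQ F arF n Ax b (Ncan Ax b g ts)) (.var α))
    (hc : ¬ Cond Ax b g ts) : VC n Ax b := by
  classical
  have hempty : aliensSet F arF n (Ncan Ax b g ts) = ∅ := by
    by_contra hne
    obtain ⟨w, hw⟩ := Set.nonempty_iff_ne_empty.mpr hne
    exact hc (cond_of_axCong_var α h w hw)
  have hvars : (absQ F arF n Ax b (Ncan Ax b g ts)).VarsIn ∅ := by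
    have h0 := varsIn_absQ_ncan (Ax := Ax) b g ts
    rw [hempty, Set.image_empty] at h0
    exact h0
  have key : ∀ β, AxCong F arF Ax b (absQ F arF n Ax b (Ncan Ax b g ts)) (.var β) := by
    intro β
    have hb := axCong_bind (fun γ => if γ = α then Tm.var β else .var γ) h
    rw [bind_of_varsIn (fun v hv => absurd hv (Set.notMem_empty v)) hvars] at hb
    simpa [Tm.bind] using hb
  exact ⟨Quot.mk _ (xTm F arF n 1), Quot.mk _ (xTm F arF n 2),
    mk_xTm_ne (by norm_num), (key _).symm.trans (key _)⟩

/-- Main lemma: modulo the degenerate situation, `interp` is equivariant under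
the renaming on terms whose deep aliens are non-collapsing. -/
theorem main_corr (i : ℕ) (hi : i ≠ 0) :
    ∀ t : CT F arF n,
      (∀ u ∈ allAliensSet F arF n t, interp F arF n Ax u = Quot.mk (Iso F arF n Ax) u) →
      interp F arF n Ax (rT i t) = RQ Ax i (interp F arF n Ax t) ∨
        ∃ (b : Bool) (g : F b) (ts : Fin (arF b g) → CT F arF n),
          t = .app (.op b g) ts ∧ VC n Ax b := by
  intro t
  induction t with
  | var v => exact fun _ => v.elim
  | app f ss ih =>
    intro hDA
    cases f with
    | gen k =>
        left
        show interp F arF n Ax (.app (.gen k) ss) = RQ Ax i (interp F arF n Ax (.app (.gen k) ss))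
        rw [interp_gen, RQ_mk]
        rfl
    | ind j =>
        left
        show interp F arF n Ax (.app (.ind (if j = 0 then i else if j = i then 0 else j)) ss) =
          RQ Ax i (interp F arF n Ax (.app (.ind j) ss))
        erw [interp_ind, interp_ind, RQ_mk]
        rfl
    | op b g =>
      by_cases hcorr : ∀ j, interp F arF n Ax (rT i (ss j)) = RQ Ax i (interp F arF n Ax (ss j))
      · -- all children correspond
        have hchild : ∀ j, Relation.EqvGen (Iso F arF n Ax)
            ((interp F arF n Ax (rT i (ss j))).out) (rT i ((interp F arF n Ax (ss j)).out)) := by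
          intro j
          refine Quot.eq.mp ?_
          rw [Quot.out_eq, hcorr j, ← RQ_mk i ((interp F arF n Ax (ss j)).out), Quot.out_eq]
        have hiso : Iso F arF n Ax (Ncan Ax b g (fun j => rT i (ss j))) (rT i (Ncan Ax b g ss)) := by
          show Iso F arF n Ax (.app (.op b g) fun j => (interp F arF n Ax (rT i (ss j))).out)
            (.app (.op b g) fun j => rT i ((interp F arF n Ax (ss j)).out))
          exact iso_congr hchild
        have hmkeq : Quot.mk (Iso F arF n Ax) (Ncan Ax b g (fun j => rT i (ss j))) =
            RQ Ax i (Quot.mk (Iso F arF n Ax) (Ncan Ax b g ss)) := by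
          rw [RQ_mk]
          exact Quot.sound hiso
        have habs : AxCong F arF Ax b (absQ F arF n Ax b (Ncan Ax b g (fun j => rT i (ss j))))
            ((absQ F arF n Ax b (Ncan Ax b g ss)).mapVar (RQ Ax i)) := by
          have h2 : AxCong F arF Ax b (absQ F arF n Ax b (Ncan Ax b g (fun j => rT i (ss j))))
              (absQ F arF n Ax b (rT i (Ncan Ax b g ss))) := leq_axCong (leq_layerize_of_iso b hiso)
          rw [absQ_rT] at h2
          exact h2
        by_cases hcs : Cond Ax b g ss
        · have hax1 : AxCong F arF Ax b (absQ F arF n Ax b (Ncan Ax b g (fun j => rT i (ss j))))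
              (.var (RQ Ax i (Quot.mk (Iso F arF n Ax) hcs.choose))) := by
            refine habs.trans ?_
            have h3 := axCong_mapVar (RQ Ax i) hcs.choose_spec.2
            simpa [Tm.mapVar] using h3
          by_cases hcr : Cond Ax b g (fun j => rT i (ss j))
          · have hax2 := hcr.choose_spec.2
            by_cases heqc : Quot.mk (Iso F arF n Ax) hcr.choose =
                RQ Ax i (Quot.mk (Iso F arF n Ax) hcs.choose)
            · left
              show interp F arF n Ax (.app (.op b g) (fun j : Fin (arF b g) => rT i (ss j))) =
                RQ Ax i (interp F arF n Ax (.app (.op b g) ss))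
              rw [interp_op_pos hcr, interp_op_pos hcs]
              exact heqc
            · right
              exact ⟨b, g, ss, rfl, Quot.mk _ hcr.choose,
                RQ Ax i (Quot.mk _ hcs.choose), heqc, hax2.symm.trans hax1⟩
          · right
            exact ⟨b, g, ss, rfl, vc_of_not_cond _ hax1 hcr⟩
        · by_cases hcr : Cond Ax b g (fun j => rT i (ss j))
          · right
            refine ⟨b, g, ss, rfl, ?_⟩
            have h3 := axCong_mapVar (RQ Ax i) habs
            rw [mapVar_comp] at h3
            have hcomp : (RQ Ax i : Alg F arF n Ax → Alg F arF n Ax) ∘ (RQ Ax i) =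
                fun q => q := funext fun q => RQ_RQ i hi q
            rw [hcomp, mapVar_id] at h3
            have h4 := axCong_mapVar (RQ Ax i) hcr.choose_spec.2
            simp only [Tm.mapVar] at h4
            exact vc_of_not_cond _ (h3.symm.trans h4) hcs
          · left
            show interp F arF n Ax (.app (.op b g) (fun j : Fin (arF b g) => rT i (ss j))) =
              RQ Ax i (interp F arF n Ax (.app (.op b g) ss))
            rw [interp_op_neg hcr, interp_op_neg hcs]
            exact hmkeq
      · -- a broken child gives the degenerate situation
        push_neg at hcorr
        obtain ⟨j, hj⟩ := hcorr
        have hDAj : ∀ u ∈ allAliensSet F arF n (ss j),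
            interp F arF n Ax u = Quot.mk (Iso F arF n Ax) u :=
          fun u hu => hDA u (allAliensSet_sub _ ss j hu)
        rcases ih j hDAj with h | ⟨b', g', ts', heq, hvc⟩
        · exact absurd h hj
        rcases eq_or_ne b' b with rfl | hbb
        · exact Or.inr ⟨b', g, ss, rfl, hvc⟩
        · exfalso
          have halien : ss j ∈ allAliensSet F arF n (.app (.op b g) ss) := by
            refine alien_mem_allAliens _ ss j ?_
            rw [heq]
            show (CSym.op b' g').sig ≠ (CSym.op b g).sig
            rw [sig_op, sig_op]
            exact fun hh => hbb (bsig_inj hh)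
          have hncj := hDA _ halien
          have hins : InSig F arF n (fun f => f.sig = bsig b') (ss j) := by
            refine insig_of_vc hvc (ss j) hDAj ?_ ⟨g', ts', heq⟩
            intro g'' ts'' heq2
            exact not_cond_of_nc' heq2 hncj
          have hfix : rT i (ss j) = ss j :=
            rT_eq_self i (fun j' h' => bsig_ne_three b' h'.symm) hins
          apply hj
          rw [hfix, hncj, RQ_mk, hfix]

/-- Non-collapsing terms with non-collapsing deep aliens stay non-collapsing
after renaming. -/
theorem nc_rT (i : ℕ) (hi : i ≠ 0) (t : CT F arF n)
    (hDA : ∀ u ∈ allAliensSet F arF n t, interp F arF n Ax u = Quot.mk (Iso F arF n Ax) u)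
    (hNC : interp F arF n Ax t = Quot.mk (Iso F arF n Ax) t) :
    interp F arF n Ax (rT i t) = Quot.mk (Iso F arF n Ax) (rT i t) := by
  rcases main_corr i hi t hDA with h | ⟨b, g, ts, heq, hvc⟩
  · rw [h, hNC, RQ_mk]
  · have hins : InSig F arF n (fun f => f.sig = bsig b) t := by
      refine insig_of_vc hvc t hDA ?_ ⟨g, ts, heq⟩
      intro g'' ts'' heq2
      exact not_cond_of_nc' heq2 hNC
    rw [rT_eq_self i (fun j' h' => bsig_ne_three b h'.symm) hins]
    exact hNC

end NCR
section Statement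
variable (F : Bool → Type) (arF : ∀ b, F b → ℕ) (n : ℕ)
variable (Ax : ∀ b, Set (Tm (F b) (arF b) ℕ × Tm (F b) (arF b) ℕ))

/-- Non-collapsing is preserved under renaming the indeterminate: if
`t^𝒜 = [t]_≅` and likewise for all alien subterms of `t` at arbitrary depth,
then the same holds for `t(xᵢ) = t[xᵢ/x]`. -/
theorem noncollapsing_rename (t : CT F arF n)
    (ht : InSig F arF n (SigP F n Set.univ {0}) t)
    (h1 : interp F arF n Ax t = Quot.mk (Iso F arF n Ax) t)
    (h2 : ∀ u ∈ allAliensSet F arF n t,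
      interp F arF n Ax u = Quot.mk (Iso F arF n Ax) u)
    (i : ℕ) (hi : 1 ≤ i) :
    interp F arF n Ax (substInd F arF n 0 (xTm F arF n i) t) =
        Quot.mk (Iso F arF n Ax) (substInd F arF n 0 (xTm F arF n i) t) ∧
      ∀ v ∈ allAliensSet F arF n (substInd F arF n 0 (xTm F arF n i) t),
        interp F arF n Ax v = Quot.mk (Iso F arF n Ax) v := by
  have hi0 : i ≠ 0 := by omega
  have hsub : substInd F arF n 0 (xTm F arF n i) t = NCR.rT i t :=
    NCR.substInd_eq_rT i hi0 ht
  rw [hsub]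
  constructor
  · exact NCR.nc_rT i hi0 t h2 h1
  · intro v hv
    rw [NCR.allAliensSet_rT] at hv
    obtain ⟨u, hu, rfl⟩ := hv
    exact NCR.nc_rT i hi0 u (fun w hw => h2 w (NCR.allAliens_trans hu hw)) (h2 u hu)
end Statement
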